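/- The critical points y = −2 and y = ±i√2 of R₂ are eventually mapped onto the repelling fixed point 4: R₂(−2) = 4, R₂(i√2) = 0, R₂(−i√2) = 0, R₂(0) = 4, and R₂(4) = 4. Hence the forward orbits of −2 and ±i√2 land on a repelling fixed point, so these critical points belong to the Julia set of R₂. -/

import Mathlib

open Complex

/-- The exact RG map of the 3-state Potts model on the two-dimensional
(`b = 2`) diamond hierarchical lattice. -/
noncomputable def pottsR2 (y : ℂ) : ℂ := ((y ^ 2 + 2) / (2 * y + 1)) ^ 2

lemma pottsR2_hasDerivAt (y : ℂ) (h : 2 * y + 1 ≠ 0) :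
    HasDerivAt pottsR2 (4 * (y ^ 2 + 2) * (y + 2) * (y - 1) / (2 * y + 1) ^ 3) y := by
  have h1 : HasDerivAt (fun y : ℂ => y ^ 2 + 2) (2 * y) y := by
    simpa using ((hasDerivAt_pow 2 y).add_const 2)
  have h2 : HasDerivAt (fun y : ℂ => 2 * y + 1) 2 y := by
    simpa using ((hasDerivAt_id y).const_mul 2).add_const 1
  have hq := h1.fun_div h2 h
  have := hq.fun_pow 2
  refine this.congr_deriv ?_
  norm_num
  field_simp
  ring

lemma deriv_pottsR2 (y : ℂ) (h : 2 * y + 1 ≠ 0) :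
    deriv pottsR2 y = 4 * (y ^ 2 + 2) * (y + 2) * (y - 1) / (2 * y + 1) ^ 3 :=
  (pottsR2_hasDerivAt y h).deriv

lemma sq_i_sqrt2 : (Complex.I * (Real.sqrt 2 : ℂ)) ^ 2 = -2 := by
  have : ((Real.sqrt 2 : ℝ) : ℂ) ^ 2 = 2 := by
    rw [← Complex.ofReal_pow, Real.sq_sqrt (by norm_num)]; norm_num
  rw [mul_pow, Complex.I_sq, this]; ring

/-- The critical points `y = −2` and `y = ±i√2` of `R₂` (where `R₂′` vanishes)
are eventually mapped onto `y = 4`, which is a repelling fixed point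
(`R₂(4) = 4`, `|R₂′(4)| > 1`): `R₂(−2) = 4`, `R₂(±i√2) = 0`, `R₂(0) = 4`.
Hence the forward orbits of these critical points land on a repelling fixed
point, so they belong to the Julia set of `R₂`. -/
theorem stmt_19 :
    deriv pottsR2 (-2) = 0 ∧
    deriv pottsR2 (Complex.I * Real.sqrt 2) = 0 ∧
    deriv pottsR2 (-(Complex.I * Real.sqrt 2)) = 0 ∧
    pottsR2 (-2) = 4 ∧
    pottsR2 (Complex.I * Real.sqrt 2) = 0 ∧
    pottsR2 (-(Complex.I * Real.sqrt 2)) = 0 ∧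
    pottsR2 0 = 4 ∧
    pottsR2 4 = 4 ∧
    1 < ‖deriv pottsR2 4‖ := by
  have hs : ((Real.sqrt 2 : ℝ) : ℂ) ≠ 0 := by
    simp [Real.sqrt_eq_zero']
  have hne : ∀ z : ℂ, z ^ 2 = -2 → 2 * z + 1 ≠ 0 := by
    intro z hz hc
    have : z = -(1/2) := by linear_combination (hc) / 2
    rw [this] at hz
    norm_num at hz
  have h1 : (Complex.I * (Real.sqrt 2 : ℂ)) ^ 2 = -2 := sq_i_sqrt2
  have h2 : (-(Complex.I * (Real.sqrt 2 : ℂ))) ^ 2 = -2 := by rw [neg_pow]; simp [h1]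
  refine ⟨?_, ?_, ?_, ?_, ?_, ?_, ?_, ?_, ?_⟩
  · rw [deriv_pottsR2 (-2) (by norm_num)]; ring
  · rw [deriv_pottsR2 _ (hne _ h1), h1]; ring
  · rw [deriv_pottsR2 _ (hne _ h2), h2]; ring
  · norm_num [pottsR2]
  · simp [pottsR2, h1]
  · simp [pottsR2, h2]
  · norm_num [pottsR2]
  · norm_num [pottsR2]
  · rw [deriv_pottsR2 4 (by norm_num)]
    rw [show (4:ℂ)^2+2 = 18 by norm_num, show (4:ℂ)+2 = 6 by norm_num,
      show (4:ℂ)-1 = 3 by norm_num, show (2*(4:ℂ)+1)^3 = 729 by norm_num,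
      show (4:ℂ)*18*6*3/729 = 16/9 by norm_num, norm_div]
    simp
    norm_num
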